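/- If F_n is a sequence of NBUE life distributions converging in distribution to a continuous life distribution F with finite mean, and the means μ_n are bounded, then for every r > 0, ∫_0^∞ x^r dF_n(x) → ∫_0^∞ x^r dF(x); in particular all moments converge. -/

import Mathlib

open MeasureTheory Set Filter

lemma ae_nonneg_of_Iio_eq_zero (Q : Measure ℝ) (hQ0 : Q (Iio 0) = 0) :
    ∀ᵐ x ∂Q, 0 ≤ x := by
  rw [ae_iff]
  simpa [Iio, not_le] using hQ0

/-- An NBUE distribution with mean `μ ≤ M'` has an exponentially decaying survival
function: `Q(t, ∞) ≤ 2 exp(-(log 2 / (2M')) t)` for `t ≥ 0`. -/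
lemma nbue_tail_bound (Q : Measure ℝ) [IsProbabilityMeasure Q]
    (hQint : Integrable id Q) (hQ0 : Q (Iio 0) = 0)
    (μ M' : ℝ) (hμ0 : 0 ≤ μ) (hμM : μ ≤ M') (hM' : 0 < M')
    (hNBUE : ∀ t ≥ (0:ℝ), ∫ x in Ioi t, (Q (Ioi x)).toReal ≤ μ * (Q (Ioi t)).toReal) :
    ∀ t ≥ (0:ℝ), (Q (Ioi t)).toReal ≤ 2 * Real.exp (-(Real.log 2 / (2*M')) * t) := by
  set S : ℝ → ℝ := fun t => (Q (Ioi t)).toReal with hS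
  have hSanti : Antitone S := fun a b hab =>
    ENNReal.toReal_mono (measure_ne_top _ _) (measure_mono (Ioi_subset_Ioi hab))
  have hS0 : ∀ t, 0 ≤ S t := fun t => ENNReal.toReal_nonneg
  have hS1 : ∀ t, S t ≤ 1 := by
    intro t
    have h := prob_le_one (μ := Q) (s := Ioi t)
    simpa using ENNReal.toReal_mono (by simp) h
  have hSmble : Measurable S := hSanti.measurable
  -- S is integrable on Ioi 0
  have hSint0 : IntegrableOn S (Ioi 0) := by
    refine ⟨hSmble.aestronglyMeasurable, ?_⟩
    rw [hasFiniteIntegral_iff_ofReal (Eventually.of_forall hS0)]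
    have hkey : ∫⁻ x, ENNReal.ofReal (id x) ∂Q = ∫⁻ t in Ioi 0, Q {a : ℝ | t < a} :=
      lintegral_eq_lintegral_meas_lt Q (ae_nonneg_of_Iio_eq_zero Q hQ0) hQint.aemeasurable
    have hlt : ∫⁻ t in Ioi 0, Q {a : ℝ | t < a} < ⊤ := hkey ▸ hQint.lintegral_lt_top
    have hofr : ∀ t : ℝ, ENNReal.ofReal (S t) = Q (Ioi t) := fun t =>
      ENNReal.ofReal_toReal (measure_ne_top _ _)
    simp only [hofr]
    exact hlt.trans_eq' (by rfl)
  have hSintOn : ∀ t : ℝ, 0 ≤ t → IntegrableOn S (Ioi t) :=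
    fun t ht => hSint0.mono_set (Ioi_subset_Ioi ht)
  -- lower bound for integrals
  have hlow : ∀ t : ℝ, 0 ≤ t → ∀ s : ℝ, 0 < s → s * S (t + s) ≤ ∫ x in Ioi t, S x := by
    intro t ht s hs
    have h1 : s * S (t + s) = ∫ _x in Ioc t (t + s), S (t + s) := by
      rw [setIntegral_const, Real.volume_real_Ioc_of_le (by linarith), add_sub_cancel_left,
        smul_eq_mul]
    rw [h1]
    have h2 : ∫ _x in Ioc t (t + s), S (t + s) ≤ ∫ x in Ioc t (t + s), S x := by
      apply setIntegral_mono_on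
      · exact integrableOn_const (by simp [Real.volume_Ioc])
      · exact (hSintOn t ht).mono_set Ioc_subset_Ioi_self
      · exact measurableSet_Ioc
      · exact fun x hx => hSanti hx.2
    refine h2.trans ?_
    exact setIntegral_mono_set (hSintOn t ht)
      (Eventually.of_forall fun x => hS0 x)
      (HasSubset.Subset.eventuallyLE Ioc_subset_Ioi_self)
  -- geometric decay of the integrated tail
  have hG : ∀ k : ℕ, ∫ x in Ioi (2*M'*k), S x ≤ μ * (1/2)^k := by
    intro k
    induction k with
    | zero =>
      simpa using (hNBUE 0 le_rfl).trans
        (by nlinarith [hS1 0, hS0 0] : μ * S 0 ≤ μ * 1)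
    | succ k ih =>
      have ht : (0:ℝ) ≤ 2*M'*k := by positivity
      have h1 : 2*M' * S (2*M'*k + 2*M') ≤ ∫ x in Ioi (2*M'*k), S x :=
        hlow _ ht _ (by linarith)
      have heq : (((k+1:ℕ)):ℝ) = (k:ℝ) + 1 := by push_cast; ring
      rw [heq]
      have h2 : S (2*M'*((k:ℝ)+1)) ≤ μ * (1/2)^k / (2*M') := by
        have heq2 : 2*M'*((k:ℝ)+1) = 2*M'*k + 2*M' := by ring
        rw [heq2, le_div_iff₀ (by linarith)]
        nlinarith [h1, ih]
      have h3 := hNBUE (2*M'*((k:ℝ)+1)) (by positivity)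
      refine h3.trans ?_
      have h4 : μ * (μ * (1/2)^k / (2*M')) ≤ μ * (1/2)^(k+1) := by
        rw [pow_succ]
        have hpk : (0:ℝ) ≤ (1/2:ℝ)^k := by positivity
        refine mul_le_mul_of_nonneg_left ?_ hμ0
        rw [div_le_iff₀ (by linarith)]
        nlinarith
      exact (mul_le_mul_of_nonneg_left h2 hμ0).trans h4
  -- pointwise bound S t ≤ (1/2)^⌊t/(2M')⌋
  intro t ht
  obtain ⟨k, hk⟩ : ∃ k : ℕ, k = ⌊t / (2*M')⌋₊ := ⟨_, rfl⟩
  have hSle : S t ≤ (1/2:ℝ)^k := by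
    cases k with
    | zero => simpa using hS1 t
    | succ j =>
      have hfl : ((j:ℝ)+1) ≤ t / (2*M') := by
        have h := Nat.floor_le (by positivity : 0 ≤ t / (2*M'))
        rw [← hk] at h
        push_cast at h
        linarith
      have htge : 2*M'*j + 2*M' ≤ t := by
        have := (le_div_iff₀ (by linarith : (0:ℝ) < 2*M')).mp hfl
        nlinarith
      have hs1 : S t ≤ S (2*M'*j + 2*M') := hSanti htge
      have hl := hlow (2*M'*j) (by positivity) (2*M') (by linarith)
      have hg := hG j
      have hpj : (0:ℝ) ≤ (1/2:ℝ)^j := by positivity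
      rw [pow_succ]
      nlinarith [hs1, hl, hg, hpj, hμM, hM']
  refine hSle.trans ?_
  have hkub : t / (2*M') < (k:ℝ) + 1 := by
    rw [hk]
    exact Nat.lt_floor_add_one _
  have hexp : (1/2:ℝ)^k = Real.exp (-((k:ℝ) * Real.log 2)) := by
    rw [← Real.exp_log (by positivity : (0:ℝ) < (1/2:ℝ)^k), Real.log_pow]
    rw [one_div, Real.log_inv]
    ring_nf
  have h2e : 2 * Real.exp (-(Real.log 2 / (2*M')) * t)
      = Real.exp (Real.log 2 + -(Real.log 2 / (2*M')) * t) := by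
    rw [Real.exp_add, Real.exp_log (by norm_num : (0:ℝ) < 2)]
  rw [hexp, h2e]
  apply Real.exp_le_exp.mpr
  have hlog2 : 0 < Real.log 2 := Real.log_pos one_lt_two
  have hmul := mul_le_mul_of_nonneg_left hkub.le hlog2.le
  have hdiv : Real.log 2 / (2*M') * t = Real.log 2 * (t / (2*M')) := by ring
  nlinarith [hmul, hdiv]

/-- The moment of order `r > 0` of a life distribution expressed via the survival function:
`∫ x^r dQ = r ∫_0^∞ Q(t,∞) t^(r-1) dt`. -/
lemma moment_eq_integral_tail (Q : Measure ℝ) [IsProbabilityMeasure Q] (hQ0 : Q (Iio 0) = 0)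
    (r : ℝ) (hr : 0 < r)
    (hint : IntegrableOn (fun t => (Q (Ioi t)).toReal * t ^ (r-1)) (Ioi 0)) :
    ∫ x, x ^ r ∂Q = r * ∫ t in Ioi 0, (Q (Ioi t)).toReal * t ^ (r-1) := by
  have hae : ∀ᵐ x ∂Q, 0 ≤ x := ae_nonneg_of_Iio_eq_zero Q hQ0
  have hnn : ∀ᵐ x ∂Q, 0 ≤ x ^ r := hae.mono fun x hx => Real.rpow_nonneg hx r
  have hmble : Measurable (fun x : ℝ => x ^ r) :=
    (Real.continuous_rpow_const hr.le).measurable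
  have h1 : ∫ x, x ^ r ∂Q = (∫⁻ x, ENNReal.ofReal (x ^ r) ∂Q).toReal := by
    rw [integral_eq_lintegral_of_nonneg_ae hnn hmble.aestronglyMeasurable]
  have h2 := lintegral_rpow_eq_lintegral_meas_lt_mul Q hae aemeasurable_id hr
  have hInn : 0 ≤ ∫ t in Ioi 0, (Q (Ioi t)).toReal * t ^ (r-1) := by
    apply setIntegral_nonneg measurableSet_Ioi
    exact fun t ht => mul_nonneg ENNReal.toReal_nonneg (Real.rpow_nonneg (le_of_lt ht) _)
  have h3 : ∫⁻ t in Ioi 0, Q {a : ℝ | t < a} * ENNReal.ofReal (t ^ (r-1))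
      = ENNReal.ofReal (∫ t in Ioi 0, (Q (Ioi t)).toReal * t ^ (r-1)) := by
    rw [ofReal_integral_eq_lintegral_ofReal hint ?nn]
    case nn =>
      filter_upwards [self_mem_ae_restrict (measurableSet_Ioi (a := (0:ℝ)))] with t ht
      exact mul_nonneg ENNReal.toReal_nonneg (Real.rpow_nonneg (le_of_lt ht) _)
    apply setLIntegral_congr_fun measurableSet_Ioi
    intro t ht
    beta_reduce
    rw [ENNReal.ofReal_mul ENNReal.toReal_nonneg,
      ENNReal.ofReal_toReal (measure_ne_top _ _)]
    rfl
  rw [h1, h2, h3, ← ENNReal.ofReal_mul hr.le, ENNReal.toReal_ofReal]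
  exact mul_nonneg hr.le hInn

/-- If NBUE life distributions `Pₙ` with bounded means converge in distribution to a
continuous life distribution `ν` with finite mean, then for every `r > 0` the `r`-th
moments converge: `∫ x^r dPₙ → ∫ x^r dν`. -/
theorem nbue_moments_converge
    (P : ℕ → Measure ℝ) (ν : Measure ℝ)
    [∀ n, IsProbabilityMeasure (P n)] [IsProbabilityMeasure ν]
    (hP0 : ∀ n, P n (Iio 0) = 0) (hν0 : ν (Iio 0) = 0)
    (hPint : ∀ n, Integrable id (P n)) (hνint : Integrable id ν)
    (μn : ℕ → ℝ) (hμn : ∀ n, μn n = ∫ x, x ∂P n)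
    (M : ℝ) (hM : ∀ n, μn n ≤ M)
    (hNBUE : ∀ n, ∀ t ≥ (0:ℝ),
      ∫ x in Ioi t, ((P n) (Ioi x)).toReal ≤ μn n * ((P n) (Ioi t)).toReal)
    (hνcont : ∀ x : ℝ, ν {x} = 0)
    (hconv : ∀ x : ℝ, Tendsto (fun n => ((P n) (Iic x)).toReal) atTop
      (nhds ((ν (Iic x)).toReal))) :
    ∀ r : ℝ, 0 < r →
      Tendsto (fun n => ∫ x, x ^ r ∂(P n)) atTop (nhds (∫ x, x ^ r ∂ν)) := by
  intro r hr
  set M' : ℝ := max M 1 with hM'def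
  have hM'pos : (0:ℝ) < M' := lt_of_lt_of_le one_pos (le_max_right M 1)
  set c : ℝ := Real.log 2 / (2*M') with hcdef
  have hc : 0 < c := div_pos (Real.log_pos one_lt_two) (by linarith)
  have haen : ∀ n, ∀ᵐ x ∂(P n), 0 ≤ x := fun n => ae_nonneg_of_Iio_eq_zero _ (hP0 n)
  have hμ0 : ∀ n, 0 ≤ μn n := fun n => by
    rw [hμn n]
    exact integral_nonneg_of_ae (haen n)
  have htail : ∀ n, ∀ t ≥ (0:ℝ), ((P n) (Ioi t)).toReal ≤ 2 * Real.exp (-c * t) :=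
    fun n => nbue_tail_bound (P n) (hPint n) (hP0 n) (μn n) M' (hμ0 n)
      ((hM n).trans (le_max_left M 1)) hM'pos (hNBUE n)
  -- survival functions converge pointwise
  have hcompl : ∀ (Q : Measure ℝ) [IsProbabilityMeasure Q], ∀ t : ℝ,
      (Q (Ioi t)).toReal = 1 - (Q (Iic t)).toReal := by
    intro Q inst t
    have h := measure_add_measure_compl (μ := Q) (measurableSet_Iic (a := t))
    rw [compl_Iic, measure_univ] at h
    have h2 : (Q (Iic t)).toReal + (Q (Ioi t)).toReal = 1 := by
      rw [← ENNReal.toReal_add (measure_ne_top _ _) (measure_ne_top _ _), h]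
      simp
    linarith
  have hSconv : ∀ t : ℝ, Tendsto (fun n => ((P n) (Ioi t)).toReal) atTop
      (nhds ((ν (Ioi t)).toReal)) := by
    intro t
    have heq : (fun n => ((P n) (Ioi t)).toReal)
        = fun n => 1 - ((P n) (Iic t)).toReal := funext fun n => hcompl (P n) t
    rw [heq, hcompl ν t]
    exact tendsto_const_nhds.sub (hconv t)
  have hνtail : ∀ t ≥ (0:ℝ), (ν (Ioi t)).toReal ≤ 2 * Real.exp (-c * t) := fun t ht =>
    le_of_tendsto (hSconv t) (Eventually.of_forall fun n => htail n t ht)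
  -- dominating function
  set g : ℝ → ℝ := fun t => (2 * Real.exp (-c * t)) * t ^ (r-1) with hgdef
  have hgint : IntegrableOn g (Ioi 0) := by
    have hbase : IntegrableOn (fun x : ℝ => x ^ (r-1) * Real.exp (-c * x)) (Ioi 0) := by
      have h := integrableOn_rpow_mul_exp_neg_mul_rpow (p := 1) (s := r-1) (b := c)
        (by linarith) one_pos hc
      simpa [Real.rpow_one] using h
    have h2 : IntegrableOn (fun x : ℝ => 2 * (x ^ (r-1) * Real.exp (-c * x))) (Ioi 0) :=
      hbase.const_mul 2
    apply h2.congr_fun ?_ measurableSet_Ioi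
    intro x _
    simp only [hgdef]
    ring
  -- integrability of the tail integrands
  have hmeasS : ∀ (Q : Measure ℝ) [IsFiniteMeasure Q],
      Measurable (fun t : ℝ => (Q (Ioi t)).toReal) := by
    intro Q inst
    have ha : Antitone (fun t : ℝ => (Q (Ioi t)).toReal) := fun a b hab =>
      ENNReal.toReal_mono (measure_ne_top _ _) (measure_mono (Ioi_subset_Ioi hab))
    exact ha.measurable
  have hSig : ∀ (Q : Measure ℝ) [IsProbabilityMeasure Q],
      (∀ t ≥ (0:ℝ), (Q (Ioi t)).toReal ≤ 2 * Real.exp (-c*t)) →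
      IntegrableOn (fun t => (Q (Ioi t)).toReal * t ^ (r-1)) (Ioi 0) := by
    intro Q inst hQtail
    have hsm : AEStronglyMeasurable (fun t => (Q (Ioi t)).toReal * t ^ (r-1))
        (volume.restrict (Ioi 0)) := by
      apply AEStronglyMeasurable.mul
      · exact (hmeasS Q).aestronglyMeasurable
      · refine ContinuousOn.aestronglyMeasurable ?_ measurableSet_Ioi
        exact fun x hx => continuousWithinAt_id.rpow_const (Or.inl (ne_of_gt hx))
    apply Integrable.mono' hgint hsm
    filter_upwards [self_mem_ae_restrict (measurableSet_Ioi (a := (0:ℝ)))] with t ht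
    have h1 : 0 ≤ t ^ (r-1) := Real.rpow_nonneg (le_of_lt ht) _
    rw [Real.norm_eq_abs, abs_of_nonneg (mul_nonneg ENNReal.toReal_nonneg h1)]
    exact mul_le_mul_of_nonneg_right (hQtail t (le_of_lt ht)) h1
  have hintn : ∀ n, IntegrableOn (fun t => ((P n) (Ioi t)).toReal * t ^ (r-1)) (Ioi 0) :=
    fun n => hSig (P n) (htail n)
  have hintν : IntegrableOn (fun t => (ν (Ioi t)).toReal * t ^ (r-1)) (Ioi 0) :=
    hSig ν hνtail
  -- moment formulas
  have hform : ∀ n, ∫ x, x ^ r ∂(P n)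
      = r * ∫ t in Ioi 0, ((P n) (Ioi t)).toReal * t ^ (r-1) :=
    fun n => moment_eq_integral_tail (P n) (hP0 n) r hr (hintn n)
  have hformν : ∫ x, x ^ r ∂ν = r * ∫ t in Ioi 0, (ν (Ioi t)).toReal * t ^ (r-1) :=
    moment_eq_integral_tail ν hν0 r hr hintν
  -- dominated convergence
  have hmain : Tendsto (fun n => ∫ t in Ioi 0, ((P n) (Ioi t)).toReal * t ^ (r-1)) atTop
      (nhds (∫ t in Ioi 0, (ν (Ioi t)).toReal * t ^ (r-1))) := by
    apply tendsto_integral_of_dominated_convergence g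
      (fun n => (hintn n).aestronglyMeasurable) hgint
    · intro n
      filter_upwards [self_mem_ae_restrict (measurableSet_Ioi (a := (0:ℝ)))] with t ht
      have h1 : 0 ≤ t ^ (r-1) := Real.rpow_nonneg (le_of_lt ht) _
      rw [Real.norm_eq_abs, abs_of_nonneg (mul_nonneg ENNReal.toReal_nonneg h1)]
      exact mul_le_mul_of_nonneg_right (htail n t (le_of_lt ht)) h1
    · exact Eventually.of_forall fun t => (hSconv t).mul_const _
  rw [hformν]
  exact (hmain.const_mul r).congr fun n => (hform n).symm
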